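/- Let w ∈ ℝⁿ be nonzero and let s⁽¹⁾, …, s⁽ᴺ⁾ ∈ ℝⁿ be vectors produced by the vector sampling scheme, so each s⁽ʲ⁾ has singleton support: s⁽ʲ⁾ = γ(w)·sign(w_{k_j})·e_{k_j} for some index k_j. Let S be the n×N matrix with columns s⁽ʲ⁾. Define y* ∈ ℝᴺ by y*_j = |w_{k_j}| / (γ(w)·n_j), where n_j = #{i : k_i = k_j}. Then y* minimizes ‖S y − w‖₂² over all y ∈ ℝᴺ with y ≥ 0 componentwise, and the minimum value equals Σ_{i ∉ D₁} w_i², where D₁ = {k_1, …, k_N} is the set of sampled indices. -/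

import Mathlib

lemma sign_mul_abs' (x : ℝ) : Real.sign x * |x| = x := by
  rcases lt_trichotomy x 0 with h | h | h
  · rw [Real.sign_of_neg h, abs_of_neg h]; ring
  · simp [h]
  · rw [Real.sign_of_pos h, abs_of_pos h]; ring

/-- Least squares over nonnegative weights with singleton-support samples:
the explicit weights `y*_j = |w_{k_j}|/(γ(w)·n_j)` minimize `‖S y − w‖₂²`
over `y ≥ 0`, and the minimum value is the mass of `w` on unsampled indices. -/
theorem stmt2 (n N : ℕ) (w : Fin n → ℝ) (hw : w ≠ 0)
    (γ : ℝ) (hγ : γ = ∑ i, |w i|)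
    (k : Fin N → Fin n) (hk : ∀ j, w (k j) ≠ 0)
    (s : Fin N → Fin n → ℝ)
    (hs : ∀ j i, s j i = if i = k j then γ * Real.sign (w (k j)) else 0)
    (ystar : Fin N → ℝ)
    (hy : ∀ j, ystar j =
      |w (k j)| / (γ * (Finset.univ.filter (fun i => k i = k j)).card)) :
    (∀ y : Fin N → ℝ, (∀ j, 0 ≤ y j) →
        ∑ i, (∑ j, ystar j * s j i - w i) ^ 2 ≤
          ∑ i, (∑ j, y j * s j i - w i) ^ 2) ∧
    ∑ i, (∑ j, ystar j * s j i - w i) ^ 2 =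
      ∑ i ∈ Finset.univ.filter (fun i => ∀ j, k j ≠ i), (w i) ^ 2 := by
  have hγpos : 0 < γ := by
    rw [hγ]
    obtain ⟨i, hi⟩ := Function.ne_iff.mp hw
    exact Finset.sum_pos' (fun i _ => abs_nonneg _)
      ⟨i, Finset.mem_univ i, abs_pos.mpr hi⟩
  have hγne : γ ≠ 0 := ne_of_gt hγpos
  -- any y gives zero on unsampled coordinates
  have hzero : ∀ (y : Fin N → ℝ) (i : Fin n), (∀ j, k j ≠ i) →
      ∑ j, y j * s j i = 0 := by
    intro y i hi
    apply Finset.sum_eq_zero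
    intro j _
    rw [hs, if_neg (fun h => hi j h.symm), mul_zero]
  -- ystar fits exactly on sampled coordinates
  have hfit : ∀ i : Fin n, (¬ ∀ j, k j ≠ i) → ∑ j, ystar j * s j i = w i := by
    intro i hi
    push_neg at hi
    obtain ⟨j0, hj0⟩ := hi
    set c : ℕ := (Finset.univ.filter (fun j => k j = i)).card with hc
    have hcpos : 0 < c := Finset.card_pos.mpr ⟨j0, by simp [hj0]⟩
    have hcne : (c : ℝ) ≠ 0 := Nat.cast_ne_zero.mpr hcpos.ne'
    have hterm : ∀ j : Fin N, ystar j * s j i =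
        if k j = i then w i / c else 0 := by
      intro j
      by_cases h : k j = i
      · rw [if_pos h, hs, if_pos h.symm, hy, h]
        rw [← hc]
        field_simp
        linear_combination sign_mul_abs' (w i)
      · rw [if_neg h, hs, if_neg (fun h' => h h'.symm), mul_zero]
    calc ∑ j, ystar j * s j i = ∑ j, if k j = i then w i / c else 0 := by
          exact Finset.sum_congr rfl (fun j _ => hterm j)
      _ = ∑ j ∈ Finset.univ.filter (fun j => k j = i), (w i / c : ℝ) := by
          rw [Finset.sum_filter]
      _ = c * (w i / c) := by rw [Finset.sum_const, ← hc, nsmul_eq_mul]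
      _ = w i := by field_simp
  set U : Finset (Fin n) := Finset.univ.filter (fun i => ∀ j, k j ≠ i) with hU
  have key : ∀ y : Fin N → ℝ,
      ∑ i, (∑ j, y j * s j i - w i) ^ 2 =
        ∑ i ∈ U, (w i) ^ 2 + ∑ i ∈ Finset.univ.filter (fun i => ¬ ∀ j, k j ≠ i),
          (∑ j, y j * s j i - w i) ^ 2 := by
    intro y
    rw [← Finset.sum_filter_add_sum_filter_not Finset.univ (fun i => ∀ j, k j ≠ i)]
    congr 1
    apply Finset.sum_congr rfl
    intro i hi
    rw [hzero y i (Finset.mem_filter.mp hi).2]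
    ring
  have hEq : ∑ i, (∑ j, ystar j * s j i - w i) ^ 2 = ∑ i ∈ U, (w i) ^ 2 := by
    rw [key]
    have : ∑ i ∈ Finset.univ.filter (fun i => ¬ ∀ j, k j ≠ i),
        (∑ j, ystar j * s j i - w i) ^ 2 = 0 := by
      apply Finset.sum_eq_zero
      intro i hi
      rw [hfit i (Finset.mem_filter.mp hi).2]
      ring
    rw [this, add_zero]
  refine ⟨fun y _ => ?_, hEq⟩
  rw [hEq, key y]
  have : 0 ≤ ∑ i ∈ Finset.univ.filter (fun i => ¬ ∀ j, k j ≠ i),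
      (∑ j, y j * s j i - w i) ^ 2 :=
    Finset.sum_nonneg (fun i _ => sq_nonneg _)
  linarith
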